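/- For any two-qubit state ρ and ±1-valued observables A₀, A₁, B₀, B₁ (self-adjoint unitaries), the CHSH value Tr[ρ(A₀⊗B₀ + A₀⊗B₁ + A₁⊗B₀ − A₁⊗B₁)] is at most 2√2 (Tsirelson's bound), where the observables act on arbitrary finite-dimensional Hilbert spaces H_A, H_B and ρ is a density operator on H_A ⊗ H_B. -/

import Mathlib

open Kronecker
open scoped ComplexOrder
open Matrix

lemma kron_sub {l p q r : Type*} (A : Matrix l p ℂ) (B C : Matrix q r ℂ) :
    A ⊗ₖ (B - C) = A ⊗ₖ B - A ⊗ₖ C := by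
  ext ⟨i,j⟩ ⟨k,l⟩
  simp [Matrix.kroneckerMap_apply, mul_sub]

lemma sub_kron {l p q r : Type*} (A B : Matrix l p ℂ) (C : Matrix q r ℂ) :
    (A - B) ⊗ₖ C = A ⊗ₖ C - B ⊗ₖ C := by
  ext ⟨i,j⟩ ⟨k,l⟩
  simp [Matrix.kroneckerMap_apply, sub_mul]

lemma kron_conjT {l q : Type*} (A : Matrix l l ℂ) (B : Matrix q q ℂ) :
    (A ⊗ₖ B)ᴴ = Aᴴ ⊗ₖ Bᴴ := by
  ext ⟨i,j⟩ ⟨k,l⟩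
  simp [Matrix.conjTranspose_apply, Matrix.kroneckerMap_apply]

lemma psd_trace_nonneg {k : Type*} [Fintype k] [DecidableEq k]
    (M : Matrix k k ℂ) (h : M.PosSemidef) : 0 ≤ M.trace := by
  rw [Matrix.trace]
  apply Finset.sum_nonneg
  intro i _
  have := h.dotProduct_mulVec_nonneg (Pi.single i 1)
  simpa [Matrix.mulVec, dotProduct, Pi.single_apply] using this

lemma trace_mul_psd_nonneg {k : Type*} [Fintype k] [DecidableEq k]
    (ρ M : Matrix k k ℂ) (hρ : ρ.PosSemidef) (hM : M.PosSemidef) :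
    0 ≤ (ρ * M).trace := by
  obtain ⟨B, rfl⟩ : ∃ B, M = Bᴴ * B := by
    open MatrixOrder in
    exact ⟨CFC.sqrt M, by
      rw [(CFC.sqrt_nonneg M).posSemidef.1.eq, CFC.sqrt_mul_sqrt_self M hM.nonneg]⟩
  have h1 : (ρ * (Bᴴ * B)).trace = ((B * ρ) * Bᴴ).trace := by
    rw [← Matrix.mul_assoc, Matrix.trace_mul_cycle]
  rw [h1]
  obtain ⟨s, rfl⟩ : ∃ s, ρ = sᴴ * s := by
    open MatrixOrder in
    exact ⟨CFC.sqrt ρ, by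
      rw [(CFC.sqrt_nonneg ρ).posSemidef.1.eq, CFC.sqrt_mul_sqrt_self ρ hρ.nonneg]⟩
  have h2 : B * (sᴴ * s) * Bᴴ = (s * Bᴴ)ᴴ * (s * Bᴴ) := by
    simp [Matrix.conjTranspose_mul, Matrix.mul_assoc]
  rw [h2]
  exact psd_trace_nonneg _ (Matrix.posSemidef_conjTranspose_mul_self _)


/-- Tsirelson's bound: for any density operator `ρ` on `H_A ⊗ H_B` (finite
dimensional) and ±1-valued observables (self-adjoint unitaries) `A₀, A₁` on
`H_A` and `B₀, B₁` on `H_B`, the CHSH value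
`Tr[ρ(A₀⊗B₀ + A₀⊗B₁ + A₁⊗B₀ − A₁⊗B₁)]` is at most `2√2`. -/
theorem stmt14 {n m : ℕ}
    (A₀ A₁ : Matrix (Fin n) (Fin n) ℂ) (B₀ B₁ : Matrix (Fin m) (Fin m) ℂ)
    (hA₀ : A₀.IsHermitian) (hA₀u : A₀ * A₀ = 1)
    (hA₁ : A₁.IsHermitian) (hA₁u : A₁ * A₁ = 1)
    (hB₀ : B₀.IsHermitian) (hB₀u : B₀ * B₀ = 1)
    (hB₁ : B₁.IsHermitian) (hB₁u : B₁ * B₁ = 1)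
    (ρ : Matrix (Fin n × Fin m) (Fin n × Fin m) ℂ)
    (hρ : ρ.PosSemidef) (hρtr : ρ.trace = 1) :
    ((ρ * (A₀ ⊗ₖ B₀ + A₀ ⊗ₖ B₁ + A₁ ⊗ₖ B₀ - A₁ ⊗ₖ B₁)).trace).re
      ≤ 2 * Real.sqrt 2 := by
  set C : Matrix (Fin n × Fin m) (Fin n × Fin m) ℂ :=
    A₀ ⊗ₖ B₀ + A₀ ⊗ₖ B₁ + A₁ ⊗ₖ B₀ - A₁ ⊗ₖ B₁ with hC
  set r : ℝ := Real.sqrt 2 with hr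
  have hrr : (r:ℂ) * (r:ℂ) = 2 := by
    rw [← Complex.ofReal_mul, Real.mul_self_sqrt (by norm_num)]
    norm_num
  set P : Matrix (Fin n × Fin m) (Fin n × Fin m) ℂ :=
    (r:ℂ) • (A₀ ⊗ₖ (1 : Matrix (Fin m) (Fin m) ℂ))
      - (1 : Matrix (Fin n) (Fin n) ℂ) ⊗ₖ (B₀ + B₁) with hP
  set Q : Matrix (Fin n × Fin m) (Fin n × Fin m) ℂ :=
    (r:ℂ) • (A₁ ⊗ₖ (1 : Matrix (Fin m) (Fin m) ℂ))
      - (1 : Matrix (Fin n) (Fin n) ℂ) ⊗ₖ (B₀ - B₁) with hQ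
  have hPh : Pᴴ = P := by
    rw [hP]
    simp [Matrix.conjTranspose_sub, Matrix.conjTranspose_smul, kron_conjT,
      hA₀.eq, hB₀.eq, hB₁.eq, Complex.star_def, Complex.conj_ofReal]
  have hQh : Qᴴ = Q := by
    rw [hQ]
    simp [Matrix.conjTranspose_sub, Matrix.conjTranspose_smul, kron_conjT,
      hA₁.eq, hB₀.eq, hB₁.eq, Complex.star_def, Complex.conj_ofReal]
  have key : P * P + Q * Q = (8:ℂ) • (1 : Matrix (Fin n × Fin m) (Fin n × Fin m) ℂ)
      - ((2:ℂ) * r) • C := by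
    rw [hP, hQ, hC]
    simp only [Matrix.sub_mul, Matrix.mul_sub, Matrix.smul_mul, Matrix.mul_smul,
      ← Matrix.mul_kronecker_mul, Matrix.one_mul, Matrix.mul_one,
      hA₀u, hA₁u, smul_smul, hrr]
    simp only [Matrix.add_mul, Matrix.mul_add, Matrix.sub_mul, Matrix.mul_sub,
      hB₀u, hB₁u, Matrix.kronecker_add, kron_sub, Matrix.add_kronecker,
      sub_kron, Matrix.one_kronecker_one, smul_add, smul_sub]
    match_scalars <;> (try simp only [mul_one]) <;> (try rw [hrr]) <;> ring
  have hM : (P * P + Q * Q).PosSemidef := by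
    have h1 : (P * P).PosSemidef := by
      have := Matrix.posSemidef_conjTranspose_mul_self P
      rwa [hPh] at this
    have h2 : (Q * Q).PosSemidef := by
      have := Matrix.posSemidef_conjTranspose_mul_self Q
      rwa [hQh] at this
    exact h1.add h2
  have h0 : 0 ≤ (ρ * (P * P + Q * Q)).trace := trace_mul_psd_nonneg _ _ hρ hM
  rw [key] at h0
  have hexp : (ρ * ((8:ℂ) • (1 : Matrix (Fin n × Fin m) (Fin n × Fin m) ℂ)
      - ((2:ℂ) * r) • C)).trace
      = 8 - ((2:ℂ) * r) * (ρ * C).trace := by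
    rw [Matrix.mul_sub, Matrix.trace_sub, Matrix.mul_smul, Matrix.mul_smul,
      Matrix.trace_smul, Matrix.trace_smul, Matrix.mul_one, hρtr]
    simp
  rw [hexp] at h0
  have h0re : (0:ℝ) ≤ 8 - 2 * r * ((ρ * C).trace.re) := by
    have := h0.1
    simpa [Complex.sub_re, Complex.mul_re, Complex.ofReal_re, Complex.ofReal_im] using this
  have hrpos : 0 < r := Real.sqrt_pos.mpr (by norm_num)
  nlinarith [Real.sq_sqrt (show (0:ℝ) ≤ 2 by norm_num), Real.sqrt_nonneg 2]
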